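/- Let p be a prime, and for 1 ≤ j ≤ p-1 let v_j ∈ ℚ^p be the vector with coordinate 0 equal to 1, coordinate j equal to -1, and all other coordinates 0. Define the cyclic shift v^{(k)}(i) = v(i - k mod p). Then (1/p)·𝟙 + Σ_{i=0}^{p-2} ((p-i-1)/p) · v_j^{(ij)} = e_0, where 𝟙 is the all-ones vector and e_0 the standard basis vector supported at 0. -/

import Mathlib

/-- The vector with value `1` at index `0`, `-1` at index `j` and `0` elsewhere. -/
def vj (p : ℕ) (j x : ZMod p) : ℚ :=
  if x = 0 then 1 else if x = j then -1 else 0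

theorem stmt_17 (p : ℕ) [Fact p.Prime] (j : ZMod p) (hj : j ≠ 0) :
    (fun x : ZMod p =>
        (1 : ℚ) / p + ∑ i ∈ Finset.range (p - 1),
          (((p : ℚ) - i - 1) / p) * vj p j (x - (i : ZMod p) * j)) =
      fun x : ZMod p => if x = 0 then (1 : ℚ) else 0 := by
  have hp : p.Prime := Fact.out
  have hp2 : 2 ≤ p := hp.two_le
  have hpQ : (p : ℚ) ≠ 0 := Nat.cast_ne_zero.mpr hp.ne_zero
  have hvalcast : ∀ d : ZMod p, ((d.val : ZMod p)) = d := by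
    intro d; simp [ZMod.natCast_val, ZMod.cast_id]
  have hcast : ∀ i : ℕ, i < p → ∀ d : ZMod p, ((i : ZMod p) = d ↔ i = d.val) := by
    intro i hi d
    constructor
    · intro h; rw [← h, ZMod.val_natCast_of_lt hi]
    · intro h; rw [h, hvalcast]
  funext x
  set c : ZMod p := x * j⁻¹ with hc
  have hxc : x = c * j := by
    rw [hc, mul_assoc, inv_mul_cancel₀ hj, mul_one]
  have hone : (1 : ZMod p) ≠ 0 := one_ne_zero
  have hne : c.val ≠ (c - 1).val := by
    intro h
    have h2 := congrArg (fun n : ℕ => (n : ZMod p)) h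
    simp only [hvalcast] at h2
    have : (1 : ZMod p) = 0 := by linear_combination h2
    exact hone this
  have hv : ∀ i ∈ Finset.range (p - 1),
      (((p : ℚ) - i - 1) / p) * vj p j (x - (i : ZMod p) * j)
      = (if i = c.val then (((p : ℚ) - i - 1) / p) else 0)
        - (if i = (c - 1).val then (((p : ℚ) - i - 1) / p) else 0) := by
    intro i hi
    have hip : i < p := lt_of_lt_of_le (Finset.mem_range.mp hi) (Nat.sub_le p 1)
    have h1 : x - (i : ZMod p) * j = 0 ↔ i = c.val := by
      rw [sub_eq_zero, hxc]
      constructor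
      · intro h; exact (hcast i hip c).mp (mul_right_cancel₀ hj h.symm)
      · intro h; rw [(hcast i hip c).mpr h]
    have h2 : x - (i : ZMod p) * j = j ↔ i = (c - 1).val := by
      rw [hxc, ← (hcast i hip (c - 1))]
      constructor
      · intro h
        have : (c - 1 - (i : ZMod p)) * j = 0 := by ring_nf; linear_combination h
        have := (mul_eq_zero.mp this).resolve_right hj
        linear_combination -this
      · intro h; rw [h]; ring
    by_cases hA : i = c.val
    · have hz : x - (i : ZMod p) * j = 0 := h1.mpr hA
      have hB : i ≠ (c - 1).val := hA ▸ (hA ▸ hne)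
      simp only [vj, if_pos hz]
      rw [if_pos hA, if_neg hB]
      ring
    · by_cases hB : i = (c - 1).val
      · have hz : x - (i : ZMod p) * j = j := h2.mpr hB
        have hz0 : x - (i : ZMod p) * j ≠ 0 := fun h => hA (h1.mp h)
        simp only [vj, if_neg hz0, if_pos hz]
        rw [if_neg hA, if_pos hB]
        ring
      · have hz0 : x - (i : ZMod p) * j ≠ 0 := fun h => hA (h1.mp h)
        have hz1 : x - (i : ZMod p) * j ≠ j := fun h => hB (h2.mp h)
        simp only [vj, if_neg hz0, if_neg hz1]
        rw [if_neg hA, if_neg hB]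
        ring
  rw [Finset.sum_congr rfl hv, Finset.sum_sub_distrib,
    Finset.sum_ite_eq' (Finset.range (p - 1)) c.val,
    Finset.sum_ite_eq' (Finset.range (p - 1)) (c - 1).val]
  by_cases hc0 : c = 0
  · have hx0 : x = 0 := by rw [hxc, hc0, zero_mul]
    have hcv : c.val = 0 := by rw [hc0, ZMod.val_zero]
    have hcm : (c - 1).val = p - 1 := by
      have : c - 1 = ((p - 1 : ℕ) : ZMod p) := by
        rw [hc0]
        push_cast [Nat.cast_sub (le_of_lt hp.one_lt)]
        simp
      rw [this, ZMod.val_natCast_of_lt (Nat.sub_lt hp.pos one_pos)]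
    have hmem0 : (0 : ℕ) ∈ Finset.range (p - 1) := by
      simp [Nat.lt_sub_iff_add_lt.mpr (by omega : 0 + 1 < p)]
    have hmem1 : (p - 1) ∉ Finset.range (p - 1) := by simp
    rw [hcv, hcm, if_pos hmem0, if_neg hmem1, if_pos hx0]
    field_simp
    simp only [Nat.cast_zero]; ring
  · have hx0 : x ≠ 0 := by rw [hxc]; exact mul_ne_zero hc0 hj
    rw [if_neg hx0]
    set k := c.val with hk
    have hk1 : 1 ≤ k := Nat.pos_of_ne_zero (fun h => hc0 (by rw [← hvalcast c, ← hk, h]; simp))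
    have hkp : k < p := ZMod.val_lt c
    have hcm : (c - 1).val = k - 1 := by
      have : c - 1 = ((k - 1 : ℕ) : ZMod p) := by
        rw [← hvalcast c, ← hk]
        push_cast [Nat.cast_sub hk1]
        ring
      rw [this, ZMod.val_natCast_of_lt (by omega)]
    have hmem1 : (k - 1) ∈ Finset.range (p - 1) := by
      simp only [Finset.mem_range]; omega
    rw [hcm, if_pos hmem1]
    have hck1 : ((k - 1 : ℕ) : ℚ) = (k : ℚ) - 1 := by
      push_cast [Nat.cast_sub hk1]; ring
    by_cases hkp1 : k < p - 1
    · rw [if_pos (Finset.mem_range.mpr hkp1), hck1]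
      field_simp
      ring
    · have : k = p - 1 := by omega
      rw [if_neg (by simp [Finset.mem_range]; omega), hck1, this]
      have : ((p - 1 : ℕ) : ℚ) = (p : ℚ) - 1 := by
        push_cast [Nat.cast_sub (le_of_lt hp.one_lt)]; ring
      rw [this]
      field_simp
      ring
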